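/- arXiv:1309.1290 — 2 statements merged into one kernel-verified Lean document; each statement's English description precedes it below -/
import Mathlib

section
/- Let x, y ∈ Γ* be reduced words with al(x) = al(y) = A ∪ B, where A, B ⊆ L are disjoint and A × B ⊆ I. Write x ≡ x_A x_B and y ≡ y_A y_B, where x_A, y_A are words over ⋃_{γ∈A} Γ_γ with al(x_A) = al(y_A) = A and x_B, y_B are words over ⋃_{γ∈B} Γ_γ with al(x_B) = al(y_B) = B. Then x and y represent conjugate elements of G if and only if x_A and y_A represent conjugate elements of G and x_B and y_B represent conjugate elements of G. -/
/-- The set of commutator relators defining a graph product. -/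
def gpRels {L : Type} (I : L → L → Prop) (G : L → Type) [∀ α, Group (G α)] :
    Set (Monoid.CoprodI G) :=
  {x | ∃ (α β : L) (g : G α) (h : G β), I α β ∧
    x = Monoid.CoprodI.of g * Monoid.CoprodI.of h *
        (Monoid.CoprodI.of g)⁻¹ * (Monoid.CoprodI.of h)⁻¹}

/-- The graph product of the groups `G α` over the independence relation `I`. -/
def GP {L : Type} (I : L → L → Prop) (G : L → Type) [∀ α, Group (G α)] : Type :=
  Monoid.CoprodI G ⧸ Subgroup.normalClosure (gpRels I G)

instance {L : Type} (I : L → L → Prop) (G : L → Type) [∀ α, Group (G α)] :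
    Group (GP I G) := QuotientGroup.Quotient.group _

/-- The canonical homomorphism of a node group into the graph product. -/
def gpOf {L : Type} (I : L → L → Prop) (G : L → Type) [∀ α, Group (G α)] (α : L) :
    G α →* GP I G :=
  (QuotientGroup.mk' _).comp Monoid.CoprodI.of

/-- A letter: a nontrivial element of one of the node groups. -/
abbrev Letter (L : Type) (G : L → Type) [∀ α, Group (G α)] : Type :=
  Σ α : L, {g : G α // g ≠ 1}

variable {L : Type} (I : L → L → Prop) (G : L → Type) [∀ α, Group (G α)]

/-- The element of the graph product represented by a word. -/
def evalWord (w : List (Letter L G)) : GP I G :=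
  (w.map fun l => gpOf I G l.1 l.2.1).prod

/-- One elementary commutation step between trace-equivalent words. -/
inductive TraceStep : List (Letter L G) → List (Letter L G) → Prop
  | swap (u v : List (Letter L G)) (a b : Letter L G) (h : I a.1 b.1) :
      TraceStep (u ++ a :: b :: v) (u ++ b :: a :: v)

/-- Trace equivalence: the congruence generated by commuting independent letters. -/
def TraceEquiv : List (Letter L G) → List (Letter L G) → Prop :=
  Relation.EqvGen (TraceStep I G)

/-- `IndepWord I G β u` means every letter of `u` is independent of `β`,
i.e. `u ∈ I(β)`. -/
def IndepWord (β : L) (u : List (Letter L G)) : Prop := ∀ c ∈ u, I c.1 β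

/-- A word is reduced if it contains no factor `b u b'` with `b, b' ∈ Γ_β`
and `u ∈ I(β)`. -/
def Reduced (w : List (Letter L G)) : Prop :=
  ¬ ∃ (β : L) (b b' : {g : G β // g ≠ 1}) (x u y : List (Letter L G)),
      w = x ++ (⟨β, b⟩ : Letter L G) :: (u ++ (⟨β, b'⟩ : Letter L G) :: y) ∧
      IndepWord I G β u

/-- `|w|_α` : number of letters of `w` in `Γ_α`. -/
noncomputable def countAlpha (α : L) (w : List (Letter L G)) : ℕ :=
  (w.filter fun l => Classical.propDecidable (l.1 = α) |>.decide).length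

/-- The alphabet `al(w)` of a word. -/
def alph (w : List (Letter L G)) : Set L := {α | ∃ l ∈ w, l.1 = α}

/-- A reduced word is cyclically reduced if it has no factorization `≡ a v a'`
with `a, a'` letters from the same node group. -/
def IsCyclicallyReduced (w : List (Letter L G)) : Prop :=
  Reduced I G w ∧
  ¬ ∃ (α : L) (a a' : {g : G α // g ≠ 1}) (v : List (Letter L G)),
      TraceEquiv I G w ((⟨α, a⟩ : Letter L G) :: (v ++ [(⟨α, a'⟩ : Letter L G)]))

/-- Words `u` and `v` are transposed if `u ≡ r s` and `v ≡ s r`. -/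
def Transposed (u v : List (Letter L G)) : Prop :=
  ∃ r s : List (Letter L G), TraceEquiv I G u (r ++ s) ∧ TraceEquiv I G v (s ++ r)

/-- `u ≈ v` : the reflexive-transitive closure of transposition. -/
def TransClosure : List (Letter L G) → List (Letter L G) → Prop :=
  Relation.ReflTransGen (Transposed I G)

/-- The formal inverse of a letter. -/
def letterInv (l : Letter L G) : Letter L G :=
  ⟨l.1, ⟨(l.2 : G l.1)⁻¹, inv_ne_one.mpr l.2.2⟩⟩

/-- The formal inverse `p̄` of a word `p`. -/
def wordInv (w : List (Letter L G)) : List (Letter L G) :=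
  (w.map (letterInv G)).reverse

/-- The dependence graph on `L`: distinct nodes are adjacent iff not independent. -/
def depGraph : SimpleGraph L where
  Adj a b := a ≠ b ∧ ¬ I a b ∧ ¬ I b a
  symm := by
    constructor
    intro a b ⟨h1, h2, h3⟩
    exact ⟨h1.symm, h3, h2⟩
  loopless := by constructor; intro a ⟨h1, _⟩; exact h1 rfl

/-- A word is connected if its alphabet induces a connected subgraph of the
dependence graph. -/
def ConnectedWord (w : List (Letter L G)) : Prop :=
  ((depGraph I).induce (alph G w)).Connected

/-- A word `w` is `α`-reduced if every word with fewer letters from `Γ_α`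
represents a different element of the graph product. -/
def AlphaReduced (α : L) (w : List (Letter L G)) : Prop :=
  ∀ w' : List (Letter L G), countAlpha G α w' < countAlpha G α w →
    evalWord I G w' ≠ evalWord I G w

section Aux

open scoped Classical

lemma gp_comm {α β : L} (hI : I α β) (g : G α) (h : G β) :
    Commute (gpOf I G α g) (gpOf I G β h) := by
  have h1 : (QuotientGroup.mk (Monoid.CoprodI.of g * Monoid.CoprodI.of h *
      (Monoid.CoprodI.of g)⁻¹ * (Monoid.CoprodI.of h)⁻¹ : Monoid.CoprodI G) :
      Monoid.CoprodI G ⧸ Subgroup.normalClosure (gpRels I G)) = 1 := by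
    rw [QuotientGroup.eq_one_iff]
    exact Subgroup.subset_normalClosure ⟨α, β, g, h, hI, rfl⟩
  have h2 : gpOf I G α g * gpOf I G β h * (gpOf I G α g)⁻¹ * (gpOf I G β h)⁻¹ = 1 := by
    exact h1
  show gpOf I G α g * gpOf I G β h = gpOf I G β h * gpOf I G α g
  calc gpOf I G α g * gpOf I G β h
      = (gpOf I G α g * gpOf I G β h * (gpOf I G α g)⁻¹ * (gpOf I G β h)⁻¹) *
        (gpOf I G β h * gpOf I G α g) := by group
    _ = 1 * (gpOf I G β h * gpOf I G α g) := by rw [h2]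
    _ = gpOf I G β h * gpOf I G α g := one_mul _

/-- The coordinate projection on the free product level. -/
noncomputable def phiC (S : Set L) : Monoid.CoprodI G →* GP I G :=
  Monoid.CoprodI.lift (fun α => if α ∈ S then gpOf I G α else 1)

lemma phiC_rels (S : Set L) : ∀ r ∈ Subgroup.normalClosure (gpRels I G),
    phiC I G S r = 1 := by
  have : Subgroup.normalClosure (gpRels I G) ≤ (phiC I G S).ker := by
    apply Subgroup.normalClosure_le_normal
    rintro r ⟨α, β, g, h, hI, rfl⟩
    rw [SetLike.mem_coe, MonoidHom.mem_ker]
    simp only [map_mul, map_inv, phiC, Monoid.CoprodI.lift_of]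
    by_cases hα : α ∈ S <;> by_cases hβ : β ∈ S <;>
      simp only [hα, hβ, if_pos, if_neg, not_false_iff, ite_true, ite_false,
        MonoidHom.one_apply, one_mul, mul_one, inv_one, mul_inv_cancel,
        inv_mul_cancel, mul_inv_cancel_right, mul_inv_cancel_left]
    rw [(gp_comm I G hI g h).eq]
    group
  exact fun r hr => this hr

/-- The coordinate projection `φ_S : GP → GP` killing generators outside `S`. -/
noncomputable def phi (S : Set L) : GP I G →* GP I G :=
  QuotientGroup.lift _ (phiC I G S) (phiC_rels I G S)

lemma phi_gpOf (S : Set L) (α : L) (g : G α) :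
    phi I G S (gpOf I G α g) = if α ∈ S then gpOf I G α g else 1 := by
  have : phi I G S (gpOf I G α g) = phiC I G S (Monoid.CoprodI.of g) :=
    QuotientGroup.lift_mk' _ _ _
  rw [this, phiC, Monoid.CoprodI.lift_of]
  by_cases hα : α ∈ S <;> simp [hα]

lemma evalWord_nil : evalWord I G ([] : List (Letter L G)) = 1 := rfl

lemma evalWord_cons (l : Letter L G) (w : List (Letter L G)) :
    evalWord I G (l :: w) = gpOf I G l.1 l.2.1 * evalWord I G w := by
  simp [evalWord]

lemma evalWord_append (u v : List (Letter L G)) :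
    evalWord I G (u ++ v) = evalWord I G u * evalWord I G v := by
  simp [evalWord]

lemma traceEquiv_eval {u v : List (Letter L G)} (h : TraceEquiv I G u v) :
    evalWord I G u = evalWord I G v := by
  induction h with
  | rel u v h =>
      cases h with
      | swap u v a b hI =>
          simp only [evalWord_append, evalWord_cons, ← mul_assoc]
          rw [mul_assoc (evalWord I G u), (gp_comm I G hI a.2.1 b.2.1).eq,
            ← mul_assoc]
  | refl u => rfl
  | symm _ _ _ ih => exact ih.symm
  | trans _ _ _ _ _ ih1 ih2 => exact ih1.trans ih2

lemma phi_eval_of_subset {S : Set L} {w : List (Letter L G)}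
    (hw : ∀ l ∈ w, l.1 ∈ S) : phi I G S (evalWord I G w) = evalWord I G w := by
  induction w with
  | nil => simp [evalWord_nil]
  | cons l w ih =>
      rw [evalWord_cons, map_mul, phi_gpOf, if_pos (hw l (List.mem_cons_self)),
        ih (fun c hc => hw c (List.mem_cons_of_mem l hc))]

lemma phi_eval_of_disjoint {S : Set L} {w : List (Letter L G)}
    (hw : ∀ l ∈ w, l.1 ∉ S) : phi I G S (evalWord I G w) = 1 := by
  induction w with
  | nil => simp [evalWord_nil]
  | cons l w ih =>
      rw [evalWord_cons, map_mul, phi_gpOf, if_neg (hw l (List.mem_cons_self)),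
        ih (fun c hc => hw c (List.mem_cons_of_mem l hc)), one_mul]

lemma commute_eval_gpOf {w : List (Letter L G)} {β : L}
    (hw : ∀ l ∈ w, I l.1 β) (h : G β) :
    Commute (evalWord I G w) (gpOf I G β h) := by
  induction w with
  | nil => rw [evalWord_nil]; exact Commute.one_left _
  | cons l w ih =>
      rw [evalWord_cons]
      exact Commute.mul_left (gp_comm I G (hw l (List.mem_cons_self)) l.2.1 h)
        (ih fun c hc => hw c (List.mem_cons_of_mem l hc))

lemma commute_eval_phi {w : List (Letter L G)} {T : Set L}
    (hw : ∀ l ∈ w, ∀ β ∈ T, I l.1 β) (z : GP I G) :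
    Commute (evalWord I G w) (phi I G T z) := by
  have hsurj : ∃ m : Monoid.CoprodI G, (QuotientGroup.mk m :
      Monoid.CoprodI G ⧸ Subgroup.normalClosure (gpRels I G)) = z :=
    Quotient.exists_rep z
  obtain ⟨m, rfl⟩ := hsurj
  have hmk : ∀ m : Monoid.CoprodI G, phi I G T (QuotientGroup.mk m) = phiC I G T m :=
    fun m => QuotientGroup.lift_mk' _ _ _
  rw [hmk]
  induction m using Monoid.CoprodI.induction_on with
  | one => rw [map_one]; exact Commute.one_right _
  | of i g =>
      rw [phiC, Monoid.CoprodI.lift_of]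
      by_cases hi : i ∈ T
      · simp only [hi, if_pos]
        exact commute_eval_gpOf I G (fun l hl => hw l hl i hi) g
      · simp only [hi, if_neg, not_false_iff]
        exact Commute.one_right _
  | mul p q hp hq => rw [map_mul]; exact Commute.mul_right hp hq

lemma alph_mem {w : List (Letter L G)} {S : Set L} (h : alph G w = S) :
    ∀ l ∈ w, l.1 ∈ S := fun l hl => h ▸ ⟨l, hl, rfl⟩

end Aux

theorem conjugacy_splits_over_independent_components
    {L : Type} [Finite L] (I : L → L → Prop) (G : L → Type) [∀ α, Group (G α)]
    (hirr : ∀ α, ¬ I α α) (hsym : ∀ α β, I α β → I β α)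
    (A B : Set L) (hdisj : Disjoint A B) (hAB : ∀ a ∈ A, ∀ b ∈ B, I a b)
    (x y xA xB yA yB : List (Letter L G))
    (hxred : Reduced I G x) (hyred : Reduced I G y)
    (halx : alph G x = A ∪ B) (haly : alph G y = A ∪ B)
    (hxA : alph G xA = A) (hyA : alph G yA = A)
    (hxB : alph G xB = B) (hyB : alph G yB = B)
    (hxsplit : TraceEquiv I G x (xA ++ xB))
    (hysplit : TraceEquiv I G y (yA ++ yB)) :
    IsConj (evalWord I G x) (evalWord I G y) ↔
      IsConj (evalWord I G xA) (evalWord I G yA) ∧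
      IsConj (evalWord I G xB) (evalWord I G yB) := by
  have hxAl : ∀ l ∈ xA, l.1 ∈ A := alph_mem G hxA
  have hyAl : ∀ l ∈ yA, l.1 ∈ A := alph_mem G hyA
  have hxBl : ∀ l ∈ xB, l.1 ∈ B := alph_mem G hxB
  have hyBl : ∀ l ∈ yB, l.1 ∈ B := alph_mem G hyB
  have hxANotB : ∀ l ∈ xA, l.1 ∉ B := fun l hl hB =>
    (hdisj.ne_of_mem (hxAl l hl) hB) rfl
  have hyANotB : ∀ l ∈ yA, l.1 ∉ B := fun l hl hB =>
    (hdisj.ne_of_mem (hyAl l hl) hB) rfl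
  have hxBNotA : ∀ l ∈ xB, l.1 ∉ A := fun l hl hA =>
    (hdisj.ne_of_mem hA (hxBl l hl)) rfl
  have hyBNotA : ∀ l ∈ yB, l.1 ∉ A := fun l hl hA =>
    (hdisj.ne_of_mem hA (hyBl l hl)) rfl
  set a := evalWord I G xA with ha
  set b := evalWord I G xB with hb
  set a' := evalWord I G yA with ha'
  set b' := evalWord I G yB with hb'
  have hx : evalWord I G x = a * b := by
    rw [traceEquiv_eval I G hxsplit, evalWord_append]
  have hy : evalWord I G y = a' * b' := by
    rw [traceEquiv_eval I G hysplit, evalWord_append]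
  rw [isConj_iff, isConj_iff, isConj_iff, hx, hy]
  constructor
  · rintro ⟨c, hc⟩
    constructor
    · refine ⟨phi I G A c, ?_⟩
      have := congrArg (phi I G A) hc
      rw [map_mul, map_mul, map_mul, map_mul, map_inv] at this
      rwa [ha, ha', hb, hb', phi_eval_of_subset I G hxAl, phi_eval_of_subset I G hyAl,
        phi_eval_of_disjoint I G hxBNotA, phi_eval_of_disjoint I G hyBNotA,
        mul_one, mul_one] at this
    · refine ⟨phi I G B c, ?_⟩
      have := congrArg (phi I G B) hc
      rw [map_mul, map_mul, map_mul, map_mul, map_inv] at this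
      rwa [ha, ha', hb, hb', phi_eval_of_subset I G hxBl, phi_eval_of_subset I G hyBl,
        phi_eval_of_disjoint I G hxANotB, phi_eval_of_disjoint I G hyANotB,
        one_mul, one_mul] at this
  · rintro ⟨⟨c1, hc1⟩, ⟨c2, hc2⟩⟩
    set w1 := phi I G A c1 with hw1
    set w2 := phi I G B c2 with hw2
    -- project conjugacy equations
    have hA1 : w1 * a = a' * w1 := by
      have := congrArg (phi I G A) hc1
      rw [map_mul, map_mul, map_inv] at this
      rw [ha, ha', phi_eval_of_subset I G hxAl, phi_eval_of_subset I G hyAl,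
        ← hw1, ← ha, ← ha'] at this
      rw [← this]; group
    have hB2 : w2 * b = b' * w2 := by
      have := congrArg (phi I G B) hc2
      rw [map_mul, map_mul, map_inv] at this
      rw [hb, hb', phi_eval_of_subset I G hxBl, phi_eval_of_subset I G hyBl,
        ← hw2, ← hb, ← hb'] at this
      rw [← this]; group
    -- commutations
    have caw2 : Commute a w2 :=
      commute_eval_phi I G (fun l hl β hβ => hAB l.1 (hxAl l hl) β hβ) c2
    have cb'w1 : Commute b' w1 :=
      commute_eval_phi I G (fun l hl β hβ => hsym β l.1 (hAB β hβ l.1 (hyBl l hl))) c1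
    refine ⟨w1 * w2, ?_⟩
    rw [mul_inv_eq_iff_eq_mul]
    calc w1 * w2 * (a * b) = w1 * (w2 * a) * b := by group
      _ = w1 * (a * w2) * b := by rw [← caw2.eq]
      _ = (w1 * a) * (w2 * b) := by group
      _ = (a' * w1) * (b' * w2) := by rw [hA1, hB2]
      _ = a' * (w1 * b') * w2 := by group
      _ = a' * (b' * w1) * w2 := by rw [← cb'w1.symm.eq]
      _ = a' * b' * (w1 * w2) := by group
end

section
/- Let C ⊆ L, let G_C be the graph product over the subgraph of (L, I) induced by C, and let ι_C : G_C → G be the canonical homomorphism induced by the inclusions G_γ → G for γ ∈ C. Then for all g, h ∈ G_C: g and h are conjugate in G_C if and only if ι_C(g) and ι_C(h) are conjugate in G. -/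
variable {L : Type} (I : L → L → Prop) (G : L → Type) [∀ α, Group (G α)]

/-- Commuting relation holds in the graph product. -/
lemma gpOf_comm {L : Type} (I : L → L → Prop) (G : L → Type) [∀ α, Group (G α)]
    {α β : L} (hI : I α β) (g : G α) (h : G β) :
    gpOf I G α g * gpOf I G β h * (gpOf I G α g)⁻¹ * (gpOf I G β h)⁻¹ = 1 := by
  have hmem : Monoid.CoprodI.of g * Monoid.CoprodI.of h * (Monoid.CoprodI.of g)⁻¹ *
      (Monoid.CoprodI.of h)⁻¹ ∈ Subgroup.normalClosure (gpRels I G) :=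
    Subgroup.subset_normalClosure ⟨α, β, g, h, hI, rfl⟩
  have := (QuotientGroup.eq_one_iff _).2 hmem
  exact this

open Classical

/-- The retraction from the full graph product onto the induced-subgraph product. -/
noncomputable def gpRetr {L : Type} (I : L → L → Prop) (G : L → Type) [∀ α, Group (G α)]
    (C : Set L) : GP I G →* GP (fun a b : C => I a b) (fun a : C => G a) :=
  QuotientGroup.lift _
    (Monoid.CoprodI.lift (fun α =>
      if h : α ∈ C then gpOf (fun a b : C => I a b) (fun a : C => G a) ⟨α, h⟩ else 1))
    (by
      intro x hx
      refine Subgroup.normalClosure_le_normal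
        (N := (Monoid.CoprodI.lift (fun α =>
          if h : α ∈ C then gpOf (fun a b : C => I a b) (fun a : C => G a) ⟨α, h⟩
          else 1)).ker) ?_ hx
      rintro _ ⟨α, β, g, h, hI, rfl⟩
      rw [SetLike.mem_coe, MonoidHom.mem_ker]
      simp only [map_mul, map_inv, Monoid.CoprodI.lift_of]
      by_cases hα : α ∈ C
      · by_cases hβ : β ∈ C
        · rw [dif_pos hα, dif_pos hβ]
          exact gpOf_comm (fun a b : C => I a b) (fun a : C => G a)
            (α := ⟨α, hα⟩) (β := ⟨β, hβ⟩) hI g h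
        · rw [dif_neg hβ]; simp
      · rw [dif_neg hα]; simp)

lemma gpRetr_of {L : Type} (I : L → L → Prop) (G : L → Type) [∀ α, Group (G α)]
    (C : Set L) (γ : C) (g : G γ) :
    gpRetr I G C (gpOf I G γ g) =
      gpOf (fun a b : C => I a b) (fun a : C => G a) γ g := by
  show gpRetr I G C ((QuotientGroup.mk' _) (Monoid.CoprodI.of g)) = _
  rw [gpRetr, QuotientGroup.mk'_apply]
  erw [QuotientGroup.lift_mk']
  rw [Monoid.CoprodI.lift_of, dif_pos γ.2]

theorem conjugacy_in_induced_subgraph_product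
    {L : Type} [Finite L] (I : L → L → Prop) (G : L → Type) [∀ α, Group (G α)]
    (hirr : ∀ α, ¬ I α α) (hsym : ∀ α β, I α β → I β α)
    (C : Set L)
    (ιC : GP (fun a b : C => I a b) (fun a : C => G a) →* GP I G)
    (hιC : ∀ (γ : C) (g : G γ),
      ιC (gpOf (fun a b : C => I a b) (fun a : C => G a) γ g) = gpOf I G γ g) :
    ∀ g h : GP (fun a b : C => I a b) (fun a : C => G a),
      IsConj g h ↔ IsConj (ιC g) (ιC h) := by
  have hretr : ∀ x, gpRetr I G C (ιC x) = x := by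
    have hcomp : ((gpRetr I G C).comp ιC).comp
        (QuotientGroup.mk' (Subgroup.normalClosure
          (gpRels (fun a b : C => I a b) (fun a : C => G a)))) =
        QuotientGroup.mk' _ := by
      apply Monoid.CoprodI.ext_hom
      intro γ
      ext g
      show gpRetr I G C (ιC (gpOf (fun a b : C => I a b) (fun a : C => G a) γ g)) =
        gpOf (fun a b : C => I a b) (fun a : C => G a) γ g
      rw [hιC, gpRetr_of]
    intro x
    induction x using QuotientGroup.induction_on with
    | H y => exact DFunLike.congr_fun hcomp y
  intro g h
  constructor
  · exact fun hc => ιC.map_isConj hc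
  · intro hc
    have := (gpRetr I G C).map_isConj hc
    rwa [hretr, hretr] at this
end
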